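/- arXiv:2406.13902 — 4 statements merged into one kernel-verified Lean document; each statement's English description precedes it below -/
import Mathlib

section
/- The power sum symmetric polynomial expands in the monomial basis as p_λ = Σ_μ P(λ,μ) m_μ, where P(λ,μ) is the number of matrices with entries in ℕ having column sums λ and row sums μ, in which each column contains at most one nonzero entry. -/
open MvPolynomial

/-- Expansion of the power sum symmetric polynomial `p_λ` in the monomial basis:
the coefficient of the monomial `x^d` in `p_λ = p_{λ_1} ⋯ p_{λ_ℓ}` equals the number of
`ℕ`-matrices with column sums `λ` and row sums `d` in which every column has at most one
nonzero entry (equivalently, `p_λ = Σ_μ P(λ,μ) m_μ`). -/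
theorem powerSum_monomial_expansion (n l : ℕ) (lam : Fin l → ℕ)
    (hA : Antitone lam) (hpos : ∀ j, 0 < lam j) (hn : ∑ j, lam j ≤ n)
    (d : Fin n →₀ ℕ) :
    MvPolynomial.coeff d
        (∏ j : Fin l, ∑ i : Fin n, (MvPolynomial.X i : MvPolynomial (Fin n) ℤ) ^ lam j)
      = (Nat.card {A : Fin n → Fin l → ℕ //
          (∀ j, ∑ i, A i j = lam j) ∧ (∀ i, ∑ j, A i j = d i) ∧
          (∀ j, ∀ i1 i2 : Fin n, A i1 j ≠ 0 → A i2 j ≠ 0 → i1 = i2)} : ℤ) := by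
  classical
  set w : (Fin l → Fin n) → (Fin n →₀ ℕ) :=
    fun f => ∑ j, Finsupp.single (f j) (lam j) with hw
  -- Left side: counts functions f with w f = d
  have key : ∀ f : Fin l → Fin n,
      (∏ j, (X (f j) : MvPolynomial (Fin n) ℤ) ^ lam j) = monomial (w f) 1 := by
    intro f
    rw [hw, monomial_sum_one]
    exact Finset.prod_congr rfl fun j _ => X_pow_eq_monomial
  have hL : MvPolynomial.coeff d
        (∏ j : Fin l, ∑ i : Fin n, (MvPolynomial.X i : MvPolynomial (Fin n) ℤ) ^ lam j)
      = ((Finset.univ.filter (fun f : Fin l → Fin n => w f = d)).card : ℤ) := by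
    rw [Fintype.prod_sum (fun j i => (X i : MvPolynomial (Fin n) ℤ) ^ lam j)]
    rw [coeff_sum]
    rw [Finset.card_filter]
    push_cast
    refine Finset.sum_congr rfl fun f _ => ?_
    rw [key f, coeff_monomial]
  rw [hL]
  congr 1
  have hwapp : ∀ (f : Fin l → Fin n) (i : Fin n),
      w f i = ∑ j, if f j = i then lam j else 0 := by
    intro f i
    rw [hw]
    rw [Finsupp.finset_sum_apply]
    exact Finset.sum_congr rfl fun j _ => by rw [Finsupp.single_apply]
  set S := {A : Fin n → Fin l → ℕ //
      (∀ j, ∑ i, A i j = lam j) ∧ (∀ i, ∑ j, A i j = d i) ∧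
      (∀ j, ∀ i1 i2 : Fin n, A i1 j ≠ 0 → A i2 j ≠ 0 → i1 = i2)} with hS
  have hex : ∀ (A : S) (j : Fin l), ∃ i, A.1 i j ≠ 0 := by
    intro A j
    by_contra hc
    push_neg at hc
    have := A.2.1 j
    simp only [hc] at this
    simp at this
    exact (hpos j).ne this
  have hcard : Nat.card S = Nat.card {f : Fin l → Fin n // w f = d} := by
    apply Nat.card_congr
    refine ⟨fun A => ⟨fun j => (hex A j).choose, ?_⟩,
        fun f => ⟨fun i j => if f.1 j = i then lam j else 0, ?_, ?_, ?_⟩, ?_, ?_⟩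
    · -- w of the extracted function equals d
      obtain ⟨A, hcol, hrow, huniq⟩ := A
      ext i
      rw [hwapp, ← hrow i]
      refine Finset.sum_congr rfl fun j _ => ?_
      have hch := (hex ⟨A, hcol, hrow, huniq⟩ j).choose_spec
      set c := (hex ⟨A, hcol, hrow, huniq⟩ j).choose with hc
      by_cases h : c = i
      · rw [if_pos h, ← hcol j]
        refine Finset.sum_eq_single i (fun b _ hb => ?_) (fun hni => absurd (Finset.mem_univ i) hni)
        by_contra hb0
        exact hb (huniq j b c hb0 (h ▸ hch) |>.trans h)
      · rw [if_neg h]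
        by_contra hne
        exact h (huniq j c i hch (Ne.symm hne))
    · intro j
      simp [Finset.sum_ite_eq]
    · intro i
      rw [show (∑ j, if f.1 j = i then lam j else 0) = w f.1 i from (hwapp f.1 i).symm, f.2]
    · intro j i1 i2 h1 h2
      simp only [ne_eq, ite_eq_right_iff, not_forall] at h1 h2
      rw [← h1.1, ← h2.1]
    · -- left inverse : matrix → function → matrix
      intro A
      apply Subtype.ext
      funext i j
      simp only
      have hch := (hex A j).choose_spec
      set c := (hex A j).choose with hc
      obtain ⟨B, hcol, hrow, huniq⟩ := A
      by_cases h : c = i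
      · rw [if_pos h, ← hcol j]
        refine Finset.sum_eq_single i (fun b _ hb => ?_) (fun hni => absurd (Finset.mem_univ i) hni)
        by_contra hb0
        exact hb (huniq j b c hb0 (h ▸ hch) |>.trans h)
      · rw [if_neg h]
        by_contra hne
        exact h (huniq j c i hch (Ne.symm hne))
    · -- right inverse : function → matrix → function
      intro f
      apply Subtype.ext
      funext j
      simp only
      generalize_proofs hE
      have hch : (if f.1 j = hE.choose then lam j else 0) ≠ 0 := hE.choose_spec
      by_contra hne
      rw [if_neg (fun hh => hne hh.symm)] at hch
      exact hch rfl
  rw [hcard, Nat.card_eq_fintype_card, Fintype.card_subtype]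
end

section
/- The elementary symmetric polynomial expands in the monomial basis as e_λ = Σ_μ E(λ,μ) m_μ, where E(λ,μ) is the number of {0,1}-matrices with column sums λ and row sums μ. -/
open MvPolynomial Finset

private lemma prod_monomial_one' {σ ι : Type*} (s : Finset ι) (f : ι → (σ →₀ ℕ)) :
    ∏ j ∈ s, (MvPolynomial.monomial (f j) (1 : ℤ)) =
      MvPolynomial.monomial (∑ j ∈ s, f j) 1 := by
  induction s using Finset.cons_induction with
  | empty => simp
  | cons a s ha ih => rw [Finset.prod_cons, Finset.sum_cons, ih, monomial_mul, one_mul]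

private lemma finsupp_sum_eq_iff {n l : ℕ} (S : Fin l → Finset (Fin n)) (d : Fin n →₀ ℕ) :
    (∑ j, ∑ i ∈ S j, Finsupp.single i 1) = d ↔
      ∀ i, (∑ j, if i ∈ S j then 1 else 0) = d i := by
  rw [Finsupp.ext_iff]
  refine forall_congr' fun i => ?_
  rw [Finsupp.finset_sum_apply]
  congr! 2 with j
  rw [Finsupp.finset_sum_apply]
  simp_rw [Finsupp.single_apply]
  rw [Finset.sum_ite_eq' (S j) i (fun _ => 1)]

/-- Expansion of the elementary symmetric polynomial `e_λ` in the monomial basis: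
the coefficient of the monomial `x^d` in `e_λ = e_{λ_1} ⋯ e_{λ_ℓ}` equals the number of
`{0,1}`-matrices with column sums `λ` and row sums `d`
(equivalently, `e_λ = Σ_μ E(λ,μ) m_μ`). -/
theorem esymm_monomial_expansion (n l : ℕ) (lam : Fin l → ℕ)
    (hA : Antitone lam) (hpos : ∀ j, 0 < lam j) (hn : ∑ j, lam j ≤ n)
    (d : Fin n →₀ ℕ) :
    MvPolynomial.coeff d
        (∏ j : Fin l, (MvPolynomial.esymm (Fin n) ℤ (lam j)))
      = (Nat.card {A : Fin n → Fin l → ℕ //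
          (∀ i j, A i j ≤ 1) ∧
          (∀ j, ∑ i, A i j = lam j) ∧ (∀ i, ∑ j, A i j = d i)} : ℤ) := by
  classical
  have hexp : ∏ j : Fin l, (MvPolynomial.esymm (Fin n) ℤ (lam j))
      = ∑ S ∈ Fintype.piFinset (fun j : Fin l =>
            Finset.powersetCard (lam j) (univ : Finset (Fin n))),
          MvPolynomial.monomial (∑ j, ∑ i ∈ S j, Finsupp.single i 1) (1 : ℤ) := by
    simp_rw [MvPolynomial.esymm_eq_sum_monomial]
    rw [Finset.prod_univ_sum]
    exact Finset.sum_congr rfl fun S _ => prod_monomial_one' _ _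
  rw [hexp, MvPolynomial.coeff_sum]
  simp_rw [MvPolynomial.coeff_monomial]
  rw [Finset.sum_boole]
  set T : Finset (Fin l → Finset (Fin n)) :=
    (Fintype.piFinset (fun j : Fin l =>
        Finset.powersetCard (lam j) (univ : Finset (Fin n)))).filter
      (fun S => (∑ j, ∑ i ∈ S j, Finsupp.single i 1) = d) with hT
  have memT : ∀ S : Fin l → Finset (Fin n), S ∈ T ↔
      (∀ j, (S j).card = lam j) ∧ ∀ i, (∑ j, if i ∈ S j then 1 else 0) = d i := by
    intro S
    rw [hT, Finset.mem_filter, Fintype.mem_piFinset, finsupp_sum_eq_iff]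
    simp_rw [Finset.mem_powersetCard_univ]
  have hcard : ∀ (f : Fin n → ℕ), (∀ i, f i ≤ 1) →
      ∑ i, f i = (univ.filter (fun i => f i = 1)).card := by
    intro f hf
    rw [Finset.card_filter]
    refine Finset.sum_congr rfl fun i _ => ?_
    rcases Nat.le_one_iff_eq_zero_or_eq_one.mp (hf i) with h | h <;> simp [h]
  have key : Nat.card {A : Fin n → Fin l → ℕ //
      (∀ i j, A i j ≤ 1) ∧
      (∀ j, ∑ i, A i j = lam j) ∧ (∀ i, ∑ j, A i j = d i)} = T.card := by
    have e : {A : Fin n → Fin l → ℕ //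
        (∀ i j, A i j ≤ 1) ∧
        (∀ j, ∑ i, A i j = lam j) ∧ (∀ i, ∑ j, A i j = d i)} ≃ {S // S ∈ T} :=
      { toFun := fun A => ⟨fun j => univ.filter (fun i => A.1 i j = 1), by
          obtain ⟨A, h1, h2, h3⟩ := A
          rw [memT]
          refine ⟨fun j => ?_, fun i => ?_⟩
          · rw [← hcard (fun i => A i j) (fun i => h1 i j), h2 j]
          · rw [← h3 i]
            refine Finset.sum_congr rfl fun j _ => ?_
            simp only [Finset.mem_filter, Finset.mem_univ, true_and]
            rcases Nat.le_one_iff_eq_zero_or_eq_one.mp (h1 i j) with h | h <;> simp [h]⟩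
        invFun := fun S => ⟨fun i j => if i ∈ S.1 j then 1 else 0, by
          refine ⟨fun i j => ?_, fun j => ?_, fun i => ?_⟩
          · dsimp only
            split <;> simp
          · have h := ((memT S.1).mp S.2).1 j
            rw [← h]
            simp [Finset.sum_ite_mem]
          · exact ((memT S.1).mp S.2).2 i⟩
        left_inv := by
          rintro ⟨A, h1, h2, h3⟩
          apply Subtype.ext
          funext i j
          simp only [Finset.mem_filter, Finset.mem_univ, true_and]
          rcases Nat.le_one_iff_eq_zero_or_eq_one.mp (h1 i j) with h | h <;> simp [h]
        right_inv := by
          rintro ⟨S, hS⟩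
          apply Subtype.ext
          funext j
          ext i
          simp }
    rw [Nat.card_congr e, Nat.card_eq_fintype_card, Fintype.card_coe]
  rw [key]
end

section
/- In the expansion of the dual immaculate polynomial, 𝔖*_α = Σ_β K^I_{α,β} M_β, the immaculate Kostka number satisfies K^I_{α,α} = 1, and K^I_{α,β} = 0 unless α ⊴ β in dominance order on strong compositions of the same size. -/
/-- A filling `T` of the diagram of the strong composition `α` (row `i` has `α_i` boxes,
`0`-indexed columns) which is an "immaculate tableau": entries are positive inside the
diagram and zero outside, entries weakly increase along rows, and entries strictly
increase down the leftmost column. -/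
def IsImmaculateFilling (α : List ℕ) (T : ℕ → ℕ → ℕ) : Prop :=
  (∀ i j : ℕ, (α.length ≤ i ∨ α.getD i 0 ≤ j) → T i j = 0) ∧
  (∀ i j : ℕ, i < α.length → j < α.getD i 0 → 0 < T i j) ∧
  (∀ i j : ℕ, i < α.length → j + 1 < α.getD i 0 → T i j ≤ T i (j + 1)) ∧
  (∀ i : ℕ, i + 1 < α.length → T i 0 < T (i + 1) 0)

/-- `T` has content `β`: the entry `v + 1` appears exactly `β_v` times, and all entries
are at most `length β`. -/
def HasContent (α β : List ℕ) (T : ℕ → ℕ → ℕ) : Prop :=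
  (∀ i j : ℕ, T i j ≤ β.length) ∧
  (∀ v : ℕ, v < β.length →
    (∑ i ∈ Finset.range α.length,
      ((Finset.range (α.getD i 0)).filter (fun j => T i j = v + 1)).card) = β.getD v 0)

lemma getD_pos (α : List ℕ) (hαpos : ∀ x ∈ α, 0 < x) {i : ℕ} (hi : i < α.length) :
    0 < α.getD i 0 := by
  rw [List.getD_eq_getElem _ _ hi]
  exact hαpos _ (List.getElem_mem hi)

lemma row_lb (α : List ℕ) (T : ℕ → ℕ → ℕ) (hαpos : ∀ x ∈ α, 0 < x)
    (hT : IsImmaculateFilling α T) :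
    ∀ i j, i < α.length → j < α.getD i 0 → i + 1 ≤ T i j := by
  obtain ⟨hz, hpos, hrow, hcol⟩ := hT
  have hcol0 : ∀ i, i < α.length → i + 1 ≤ T i 0 := by
    intro i
    induction i with
    | zero => intro hi; exact hpos 0 0 hi (getD_pos α hαpos hi)
    | succ n ih =>
      intro hi
      have := hcol n hi
      have := ih (Nat.lt_of_succ_lt hi)
      omega
  intro i j hi
  induction j with
  | zero => intro _; exact hcol0 i hi
  | succ n ih =>
    intro hj
    exact le_trans (ih (Nat.lt_of_succ_lt hj)) (hrow i n hi hj)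

lemma count_eq (α β : List ℕ) (T : ℕ → ℕ → ℕ) (hαpos : ∀ x ∈ α, 0 < x)
    (hT : IsImmaculateFilling α T) (hC : HasContent α β T) {m : ℕ} (hm : m ≤ β.length) :
    ∑ i ∈ Finset.range α.length,
      ((Finset.range (α.getD i 0)).filter (fun j => T i j ≤ m)).card
    = ∑ v ∈ Finset.range m, β.getD v 0 := by
  have key : ∀ i ∈ Finset.range α.length,
      ((Finset.range (α.getD i 0)).filter (fun j => T i j ≤ m)).card
      = ∑ v ∈ Finset.range m, ((Finset.range (α.getD i 0)).filter (fun j => T i j = v + 1)).card := by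
    intro i hi
    rw [Finset.mem_range] at hi
    have hunion : (Finset.range (α.getD i 0)).filter (fun j => T i j ≤ m)
        = (Finset.range m).biUnion (fun v => (Finset.range (α.getD i 0)).filter (fun j => T i j = v + 1)) := by
      ext j
      simp only [Finset.mem_filter, Finset.mem_biUnion, Finset.mem_range]
      constructor
      · rintro ⟨hj, hle⟩
        have h1 := hT.2.1 i j hi hj
        exact ⟨T i j - 1, by omega, hj, by omega⟩
      · rintro ⟨v, hv, hj, he⟩
        exact ⟨hj, by omega⟩
    rw [hunion, Finset.card_biUnion]
    intro x _ y _ hxy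
    simp only [Finset.disjoint_left, Finset.mem_filter]
    rintro a ⟨_, h1⟩ ⟨_, h2⟩
    omega
  rw [Finset.sum_congr rfl key, Finset.sum_comm]
  exact Finset.sum_congr rfl fun v hv => hC.2 v (lt_of_lt_of_le (Finset.mem_range.1 hv) hm)

lemma count_le (α β : List ℕ) (T : ℕ → ℕ → ℕ) (hαpos : ∀ x ∈ α, 0 < x)
    (hT : IsImmaculateFilling α T) (hC : HasContent α β T) (m : ℕ) (hm : m ≤ β.length) :
    ∑ v ∈ Finset.range m, β.getD v 0
    ≤ ∑ i ∈ Finset.range (min m α.length), α.getD i 0 := by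
  rw [← count_eq α β T hαpos hT hC hm]
  have hsub : ∑ i ∈ Finset.range α.length,
      ((Finset.range (α.getD i 0)).filter (fun j => T i j ≤ m)).card
      = ∑ i ∈ Finset.range (min m α.length),
      ((Finset.range (α.getD i 0)).filter (fun j => T i j ≤ m)).card := by
    rw [eq_comm]
    apply Finset.sum_subset (Finset.range_subset_range.2 (min_le_right _ _))
    intro i hi hni
    rw [Finset.mem_range] at hi
    rw [Finset.mem_range, not_lt] at hni
    have hmi : m ≤ i := by omega
    rw [Finset.card_eq_zero, Finset.filter_eq_empty_iff]
    intro j hj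
    rw [Finset.mem_range] at hj
    have := row_lb α T hαpos hT i j hi hj
    omega
  rw [hsub]
  apply Finset.sum_le_sum
  intro i _
  exact le_trans (Finset.card_filter_le _ _) (by rw [Finset.card_range])

lemma take_sum_eq (l : List ℕ) (m : ℕ) :
    (l.take m).sum = ∑ i ∈ Finset.range (min m l.length), l.getD i 0 := by
  induction l generalizing m with
  | nil => simp
  | cons a t ih =>
    cases m with
    | zero => simp
    | succ m =>
      rw [List.take_succ_cons, List.sum_cons, ih, List.length_cons,
        Nat.succ_min_succ, Finset.sum_range_succ']
      simp [add_comm]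

lemma dominance (α β : List ℕ) (T : ℕ → ℕ → ℕ) (hαpos : ∀ x ∈ α, 0 < x)
    (hT : IsImmaculateFilling α T) (hC : HasContent α β T) :
    ∀ m, (β.take m).sum ≤ (α.take m).sum := by
  intro m
  rw [take_sum_eq, take_sum_eq]
  refine le_trans (count_le α β T hαpos hT hC (min m β.length) (min_le_right _ _))
    (Finset.sum_le_sum_of_subset (Finset.range_subset_range.2 ?_))
  omega

lemma box_eq (α : List ℕ) (T : ℕ → ℕ → ℕ) (hαpos : ∀ x ∈ α, 0 < x)
    (hT : IsImmaculateFilling α T) (hC : HasContent α α T) :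
    ∀ i j, i < α.length → j < α.getD i 0 → T i j = i + 1 := by
  intro i j hi hj
  have hlb := row_lb α T hαpos hT i j hi hj
  have hm : i + 1 ≤ α.length := hi
  have hcnt := count_eq α α T hαpos hT hC hm
  have hrestrict : ∑ i' ∈ Finset.range α.length,
      ((Finset.range (α.getD i' 0)).filter (fun j' => T i' j' ≤ i + 1)).card
      = ∑ i' ∈ Finset.range (i + 1),
      ((Finset.range (α.getD i' 0)).filter (fun j' => T i' j' ≤ i + 1)).card := by
    rw [eq_comm]
    apply Finset.sum_subset (Finset.range_subset_range.2 hm)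
    intro x hx hnx
    rw [Finset.mem_range] at hx
    rw [Finset.mem_range, not_lt] at hnx
    rw [Finset.card_eq_zero, Finset.filter_eq_empty_iff]
    intro j' hj'
    rw [Finset.mem_range] at hj'
    have := row_lb α T hαpos hT x j' hx hj'
    omega
  rw [hrestrict] at hcnt
  have hall := (Finset.sum_eq_sum_iff_of_le (f := fun i' =>
      ((Finset.range (α.getD i' 0)).filter (fun j' => T i' j' ≤ i + 1)).card)
      (g := fun i' => α.getD i' 0)
      (fun i' _ => le_trans (Finset.card_filter_le _ _) (le_of_eq (Finset.card_range _)))).1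
      hcnt i (Finset.self_mem_range_succ i)
  have heq : (Finset.range (α.getD i 0)).filter (fun j' => T i j' ≤ i + 1)
      = Finset.range (α.getD i 0) :=
    Finset.eq_of_subset_of_card_le (Finset.filter_subset _ _)
      (by rw [Finset.card_range]; omega)
  have hjmem : j ∈ (Finset.range (α.getD i 0)).filter (fun j' => T i j' ≤ i + 1) := by
    rw [heq]; exact Finset.mem_range.2 hj
  rw [Finset.mem_filter] at hjmem
  omega

lemma T0_spec (α : List ℕ) (hαpos : ∀ x ∈ α, 0 < x) :
    IsImmaculateFilling α (fun i j => if i < α.length ∧ j < α.getD i 0 then i + 1 else 0) ∧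
    HasContent α α (fun i j => if i < α.length ∧ j < α.getD i 0 then i + 1 else 0) := by
  refine ⟨⟨?_, ?_, ?_, ?_⟩, ?_, ?_⟩
  · intro i j h
    simp only [ite_eq_right_iff]
    omega
  · intro i j hi hj
    simp only [hi, hj, and_self, if_true]
    omega
  · intro i j hi hj
    have h1 : j < α.getD i 0 := by omega
    dsimp only
    rw [if_pos ⟨hi, h1⟩, if_pos ⟨hi, hj⟩]
  · intro i hi
    have h1 := getD_pos α hαpos (Nat.lt_of_succ_lt hi)
    have h2 := getD_pos α hαpos hi
    simp only [Nat.lt_of_succ_lt hi, hi, h1, h2, and_self, if_true, true_and]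
    omega
  · intro i j
    dsimp only
    split <;> omega
  · intro v hv
    rw [Finset.sum_eq_single v]
    · have : ∀ j' ∈ Finset.range (α.getD v 0),
          (if v < α.length ∧ j' < α.getD v 0 then v + 1 else 0) = v + 1 := by
        intro j' hj'
        rw [Finset.mem_range] at hj'
        rw [if_pos ⟨hv, hj'⟩]
      rw [Finset.filter_true_of_mem (fun j' hj' => this j' hj'), Finset.card_range]
    · intro b hb hbv
      rw [Finset.mem_range] at hb
      rw [Finset.card_eq_zero, Finset.filter_eq_empty_iff]
      intro j' hj'
      rw [Finset.mem_range] at hj'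
      simp only [hb, hj', and_self, if_true]
      omega
    · intro h
      exact absurd (Finset.mem_range.2 hv) h

/-- The immaculate Kostka number `K^I_{α,β}`. -/
noncomputable def immaculateKostka (α β : List ℕ) : ℕ :=
  Nat.card {T : ℕ → ℕ → ℕ // IsImmaculateFilling α T ∧ HasContent α β T}

/-- In the expansion `𝔖*_α = Σ_β K^I_{α,β} M_β`, the immaculate Kostka numbers satisfy
`K^I_{α,α} = 1` and `K^I_{α,β} = 0` unless `α ⊴ β` in dominance order on strong
compositions of the same size (partial sums of `α` at least those of `β`). -/
theorem immaculateKostka_unitriangular (k : ℕ) (α β : List ℕ)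
    (hαpos : ∀ x ∈ α, 0 < x) (hβpos : ∀ x ∈ β, 0 < x)
    (hαsum : α.sum = k) (hβsum : β.sum = k) :
    immaculateKostka α α = 1 ∧
    (¬ (∀ i : ℕ, (β.take i).sum ≤ (α.take i).sum) → immaculateKostka α β = 0) := by
  constructor
  · rw [immaculateKostka, Nat.card_eq_one_iff_unique]
    refine ⟨⟨?_⟩, ⟨⟨_, T0_spec α hαpos⟩⟩⟩
    rintro ⟨T, hT, hC⟩ ⟨T', hT', hC'⟩
    apply Subtype.ext
    funext i j
    show T i j = T' i j
    by_cases h : i < α.length ∧ j < α.getD i 0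
    · rw [box_eq α T hαpos hT hC i j h.1 h.2, box_eq α T' hαpos hT' hC' i j h.1 h.2]
    · have h' : α.length ≤ i ∨ α.getD i 0 ≤ j := by omega
      rw [hT.1 i j h', hT'.1 i j h']
  · intro hdom
    rw [immaculateKostka]
    have : IsEmpty {T : ℕ → ℕ → ℕ // IsImmaculateFilling α T ∧ HasContent α β T} := by
      constructor
      rintro ⟨T, hT, hC⟩
      exact hdom (dominance α β T hαpos hT hC)
    exact Nat.card_of_isEmpty
end

section
/- For any composition α of k into at most n positive parts and a uniquely determined diagonal: the number of fillings counted by K^{atom}_{α,α} equals 1, i.e., the unique augmented tableau of shape D(α) and content α satisfying the Demazure atom filling conditions has all entries i in row i. -/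
/-- `T` is an augmented filling of the diagram of the composition `α` counted in the
definition of Demazure atoms: row `i` (`0`-indexed) has an augmented box in column `0`
filled with `i + 1` followed by `α_i` boxes in columns `1, …, α_i`; entries are zero
outside the augmented diagram and positive inside; column entries are distinct; entries
weakly decrease along rows; and the triple (inversion) conditions hold. -/
def IsAtomFilling (α : List ℕ) (T : ℕ → ℕ → ℕ) : Prop :=
  (∀ i : ℕ, i < α.length → T i 0 = i + 1) ∧
  (∀ i j : ℕ, (α.length ≤ i ∨ α.getD i 0 < j) → T i j = 0) ∧
  (∀ i j : ℕ, i < α.length → j ≤ α.getD i 0 → 0 < T i j) ∧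
  (∀ j i1 i2 : ℕ, i1 < i2 → i2 < α.length →
    j ≤ α.getD i1 0 → j ≤ α.getD i2 0 → T i1 j ≠ T i2 j) ∧
  (∀ i j : ℕ, i < α.length → j + 1 ≤ α.getD i 0 → T i (j + 1) ≤ T i j) ∧
  (∀ i j k : ℕ, i < j → j < α.length → 1 ≤ k →
    ((α.getD j 0 ≤ α.getD i 0 → k ≤ α.getD i 0 → k ≤ α.getD j 0 →
      ((T i (k - 1) < T j k ∧ T j k < T i k) ∨
       (T i k ≤ T i (k - 1) ∧ T i (k - 1) < T j k) ∨
       (T j k < T i k ∧ T i k ≤ T i (k - 1)))) ∧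
     (α.getD i 0 < α.getD j 0 → k ≤ α.getD j 0 → k - 1 ≤ α.getD i 0 →
      ((T j (k - 1) < T i (k - 1) ∧ T i (k - 1) < T j k) ∨
       (T j k ≤ T j (k - 1) ∧ T j (k - 1) < T i (k - 1)) ∨
       (T i (k - 1) < T j k ∧ T j k ≤ T j (k - 1))))))

/-- `T` has content `β` on the non-augmented boxes: the entry `v + 1` appears exactly
`β_v` times among the boxes in columns `1, …, α_i`. -/
def AtomContent (α β : List ℕ) (T : ℕ → ℕ → ℕ) : Prop :=
  ∀ v : ℕ, v < β.length →
    (∑ i ∈ Finset.range α.length,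
      ((Finset.Icc 1 (α.getD i 0)).filter (fun j => T i j = v + 1)).card) = β.getD v 0

lemma atom_row_bound (α : List ℕ) (T : ℕ → ℕ → ℕ) (hF : IsAtomFilling α T) :
    ∀ i j, i < α.length → j ≤ α.getD i 0 → T i j ≤ i + 1 := by
  intro i j hi
  induction j with
  | zero => intro _; rw [hF.1 i hi]
  | succ j ih =>
    intro hj
    exact le_trans (hF.2.2.2.2.1 i j hi hj) (ih (Nat.le_of_succ_le hj))

lemma atom_key (α : List ℕ) (T : ℕ → ℕ → ℕ)
    (hF : IsAtomFilling α T) (hC : AtomContent α α T) :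
    ∀ v, v < α.length →
      (∀ j, j ≤ α.getD v 0 → T v j = v + 1) ∧
      (∀ i, i < α.length → i ≠ v → ∀ j, 1 ≤ j → j ≤ α.getD i 0 → T i j ≠ v + 1) := by
  intro v
  induction v using Nat.strong_induction_on with
  | _ v IH =>
  intro hv
  have hrow : ∀ j, j ≤ α.getD v 0 → T v j = v + 1 := by
    intro j hj
    have hle : T v j ≤ v + 1 := atom_row_bound α T hF v j hv hj
    have hposj : 0 < T v j := hF.2.2.1 v j hv hj
    by_contra hne
    have hw1 : T v j = (T v j - 1) + 1 := by omega
    have hwv : T v j - 1 < v := by omega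
    rcases Nat.eq_zero_or_pos j with rfl | hj1
    · exact hne (hF.1 v hv)
    · exact (IH _ hwv (lt_trans hwv hv)).2 v hv (by omega) j hj1 hj hw1
  refine ⟨hrow, ?_⟩
  have hsum := hC v hv
  have hcardv : ((Finset.Icc 1 (α.getD v 0)).filter (fun j => T v j = v + 1)).card
      = α.getD v 0 := by
    rw [Finset.filter_true_of_mem, Nat.card_Icc]
    · omega
    · intro j hj
      exact hrow j (Finset.mem_Icc.mp hj).2
  have hsplit := Finset.add_sum_erase (Finset.range α.length)
    (fun i => ((Finset.Icc 1 (α.getD i 0)).filter (fun j => T i j = v + 1)).card)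
    (Finset.mem_range.mpr hv)
  have hrest : ∑ i ∈ (Finset.range α.length).erase v,
      ((Finset.Icc 1 (α.getD i 0)).filter (fun j => T i j = v + 1)).card = 0 := by
    omega
  intro i hi hiv j hj1 hj2 hTij
  have hmem : i ∈ (Finset.range α.length).erase v :=
    Finset.mem_erase.mpr ⟨hiv, Finset.mem_range.mpr hi⟩
  have hz := (Finset.sum_eq_zero_iff.mp hrest) i hmem
  rw [Finset.card_eq_zero] at hz
  have : j ∈ (Finset.Icc 1 (α.getD i 0)).filter (fun j => T i j = v + 1) :=
    Finset.mem_filter.mpr ⟨Finset.mem_Icc.mpr ⟨hj1, hj2⟩, hTij⟩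
  rw [hz] at this
  exact absurd this (Finset.notMem_empty j)

lemma atom_exists (α : List ℕ) (hpos : ∀ x ∈ α, 0 < x) :
    IsAtomFilling α (fun i j => if i < α.length ∧ j ≤ α.getD i 0 then i + 1 else 0) ∧
    AtomContent α α (fun i j => if i < α.length ∧ j ≤ α.getD i 0 then i + 1 else 0) := by
  have hT : ∀ i j, i < α.length → j ≤ α.getD i 0 →
      (if i < α.length ∧ j ≤ α.getD i 0 then i + 1 else 0) = i + 1 := by
    intro i j hi hj; rw [if_pos ⟨hi, hj⟩]
  constructor
  · refine ⟨?_, ?_, ?_, ?_, ?_, ?_⟩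
    · intro i hi; exact hT i 0 hi (Nat.zero_le _)
    · intro i j h
      dsimp only
      rw [if_neg]; rintro ⟨h1, h2⟩; omega
    · intro i j hi hj; dsimp only; rw [hT i j hi hj]; omega
    · intro j i1 i2 h12 h2 hj1 hj2
      dsimp only
      rw [hT i1 j (lt_trans h12 h2) hj1, hT i2 j h2 hj2]; omega
    · intro i j hi hj
      dsimp only
      rw [hT i (j + 1) hi hj, hT i j hi (by omega)]
    · intro i j k hij hj hk
      constructor
      · intro h1 h2 h3
        dsimp only
        rw [hT i (k - 1) (lt_trans hij hj) (by omega), hT j k hj h3,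
          hT i k (lt_trans hij hj) h2]
        right; left; omega
      · intro h1 h2 h3
        dsimp only
        rw [hT j (k - 1) hj (by omega), hT i (k - 1) (lt_trans hij hj) h3,
          hT j k hj h2]
        right; right; omega
  · intro v hv
    rw [Finset.sum_eq_single v]
    · rw [Finset.filter_true_of_mem, Nat.card_Icc]
      · omega
      · intro j hj
        exact hT v j hv (Finset.mem_Icc.mp hj).2
    · intro i hi hiv
      rw [Finset.card_eq_zero, Finset.filter_eq_empty_iff]
      intro j hj
      dsimp only
      rw [hT i j (Finset.mem_range.mp hi) (Finset.mem_Icc.mp hj).2]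
      omega
    · intro h
      exact absurd (Finset.mem_range.mpr hv) h

/-- The diagonal Demazure-atom Kostka number is `1`: for a composition `α` of `k` into at
most `n` positive parts, there is exactly one augmented filling of shape `D(α)` and
content `α` satisfying the Demazure atom conditions, namely the filling whose row `i`
consists entirely of the entry `i` (`i + 1` in `0`-indexed form). -/
theorem atomKostka_diagonal (n k : ℕ) (α : List ℕ)
    (hpos : ∀ x ∈ α, 0 < x) (hlen : α.length ≤ n) (hsum : α.sum = k) :
    Nat.card {T : ℕ → ℕ → ℕ // IsAtomFilling α T ∧ AtomContent α α T} = 1 ∧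
    (∀ T : ℕ → ℕ → ℕ, IsAtomFilling α T → AtomContent α α T →
      ∀ i j : ℕ, i < α.length → j ≤ α.getD i 0 → T i j = i + 1) := by
  have huniq : ∀ T : ℕ → ℕ → ℕ, IsAtomFilling α T → AtomContent α α T →
      ∀ i j : ℕ, i < α.length → j ≤ α.getD i 0 → T i j = i + 1 := by
    intro T hF hC i j hi hj
    exact (atom_key α T hF hC i hi).1 j hj
  refine ⟨?_, huniq⟩
  rw [Nat.card_eq_one_iff_unique]
  constructor
  · constructor
    rintro ⟨T, hTF, hTC⟩ ⟨S, hSF, hSC⟩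
    apply Subtype.ext
    funext i j
    show T i j = S i j
    by_cases hi : i < α.length
    · by_cases hj : j ≤ α.getD i 0
      · rw [huniq T hTF hTC i j hi hj, huniq S hSF hSC i j hi hj]
      · rw [hTF.2.1 i j (Or.inr (by omega)), hSF.2.1 i j (Or.inr (by omega))]
    · rw [hTF.2.1 i j (Or.inl (by omega)), hSF.2.1 i j (Or.inl (by omega))]
  · exact ⟨⟨_, (atom_exists α hpos).1, (atom_exists α hpos).2⟩⟩
end
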